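/- For finite sets A, B of real numbers, ∑_s E(A_s, B) ≤ E_3(A)^{2/3} · E_3(B)^{1/3}, where the sum is over all s ∈ A − A. -/

import Mathlib

open Finset Pointwise

noncomputable def shiftSet (A : Finset ℝ) (s : ℝ) : Finset ℝ := A.image (· + s)

noncomputable def Asub (A : Finset ℝ) (s : ℝ) : Finset ℝ := A ∩ shiftSet A s

noncomputable def dXY (X Y : Finset ℝ) (s : ℝ) : ℕ :=
  ((X ×ˢ Y).filter (fun p => p.1 - p.2 = s)).card

/-- `E(X,Y) = ∑_s δ_X(s) δ_Y(s)`. -/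
noncomputable def energy (X Y : Finset ℝ) : ℝ :=
  ∑ s ∈ X - X, (dXY X X s : ℝ) * (dXY Y Y s : ℝ)

/-- `E_3(X) = ∑_s δ_X(s)^3`. -/
noncomputable def energy3 (X : Finset ℝ) : ℝ :=
  ∑ s ∈ X - X, (dXY X X s : ℝ) ^ 3

lemma mem_Asub {A : Finset ℝ} {s x : ℝ} : x ∈ Asub A s ↔ x ∈ A ∧ x - s ∈ A := by
  simp only [Asub, shiftSet, mem_inter, mem_image]
  constructor
  · rintro ⟨hx, a, ha, rfl⟩
    exact ⟨hx, by simpa using ha⟩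
  · rintro ⟨hx, h2⟩
    exact ⟨hx, x - s, h2, by ring⟩

lemma Asub_subset {A : Finset ℝ} {s : ℝ} : Asub A s ⊆ A := Finset.inter_subset_left

lemma dXY_eq_zero {X : Finset ℝ} {t : ℝ} (h : t ∉ X - X) : dXY X X t = 0 := by
  rw [dXY, Finset.card_eq_zero, Finset.filter_eq_empty_iff]
  rintro ⟨x, y⟩ hxy h'
  exact h (Finset.mem_sub.mpr ⟨x, (Finset.mem_product.mp hxy).1, y,
    (Finset.mem_product.mp hxy).2, h'⟩)

/-- Key counting identity: `∑_{s ∈ A-A} δ_{A_s}(t) = δ_A(t)^2`. -/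
lemma key (A : Finset ℝ) (t : ℝ) :
    ∑ s ∈ A - A, dXY (Asub A s) (Asub A s) t = dXY A A t * dXY A A t := by
  classical
  have h1 : ∑ s ∈ A - A, dXY (Asub A s) (Asub A s) t =
      ((A - A).sigma fun s => ((Asub A s ×ˢ Asub A s).filter fun p => p.1 - p.2 = t)).card := by
    rw [Finset.card_sigma]; rfl
  have h2 : dXY A A t * dXY A A t =
      ((((A ×ˢ A).filter fun p => p.1 - p.2 = t) ×ˢ
        ((A ×ˢ A).filter fun p => p.1 - p.2 = t)).card) := by
    rw [Finset.card_product]; rfl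
  rw [h1, h2]
  apply Finset.card_nbij' (i := fun x => ((x.2.1, x.2.2), (x.2.1 - x.1, x.2.2 - x.1)))
    (j := fun y => ⟨y.1.1 - y.2.1, (y.1.1, y.1.2)⟩)
  · rintro ⟨s, u, v⟩ h
    rw [Finset.mem_coe, Finset.mem_sigma, Finset.mem_filter, Finset.mem_product] at h
    obtain ⟨hs, ⟨hu, hv⟩, huvt⟩ := h
    rw [mem_Asub] at hu hv
    simp only at huvt
    rw [Finset.mem_coe, Finset.mem_product, Finset.mem_filter, Finset.mem_filter,
      Finset.mem_product, Finset.mem_product]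
    exact ⟨⟨⟨hu.1, hv.1⟩, huvt⟩, ⟨hu.2, hv.2⟩, by simpa using huvt⟩
  · rintro ⟨⟨x, y⟩, ⟨x', y'⟩⟩ h
    rw [Finset.mem_coe, Finset.mem_product, Finset.mem_filter, Finset.mem_filter,
      Finset.mem_product, Finset.mem_product] at h
    obtain ⟨⟨⟨hx, hy⟩, ht1⟩, ⟨hx', hy'⟩, ht2⟩ := h
    simp only at hx hy hx' hy' ht1 ht2
    rw [Finset.mem_coe, Finset.mem_sigma, Finset.mem_filter, Finset.mem_product, mem_Asub, mem_Asub]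
    simp only
    refine ⟨Finset.mem_sub.mpr ⟨x, hx, x', hx', rfl⟩, ⟨⟨hx, by simpa using hx'⟩,
      ⟨hy, ?_⟩⟩, ht1⟩
    have : y - (x - x') = y' := by linarith
    rw [this]; exact hy'
  · rintro ⟨s, u, v⟩ _
    simp
  · rintro ⟨⟨x, y⟩, ⟨x', y'⟩⟩ h
    rw [Finset.mem_coe, Finset.mem_product, Finset.mem_filter, Finset.mem_filter,
      Finset.mem_product, Finset.mem_product] at h
    obtain ⟨⟨⟨hx, hy⟩, ht1⟩, ⟨hx', hy'⟩, ht2⟩ := h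
    simp only at ht1 ht2 ⊢
    have hxy : x - (x - x') = x' := by ring
    have hyy : y - (x - x') = y' := by linarith
    rw [hxy, hyy]

lemma energy_Asub_eq (A B : Finset ℝ) (s : ℝ) :
    energy (Asub A s) B =
      ∑ t ∈ A - A, (dXY (Asub A s) (Asub A s) t : ℝ) * (dXY B B t : ℝ) := by
  apply Finset.sum_subset (Finset.sub_subset_sub Asub_subset Asub_subset)
  intro t _ ht
  rw [dXY_eq_zero ht]
  simp

lemma rpow_sq_three_halves {x : ℝ} (hx : 0 ≤ x) : (x ^ 2) ^ ((3 : ℝ) / 2) = x ^ 3 := by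
  rw [← Real.rpow_natCast x 2, ← Real.rpow_natCast x 3,
    ← Real.rpow_mul hx]
  norm_num

theorem stmt2 (A B : Finset ℝ) :
    ∑ s ∈ A - A, energy (Asub A s) B ≤
      energy3 A ^ ((2 : ℝ) / 3) * energy3 B ^ ((1 : ℝ) / 3) := by
  classical
  have h1 : ∑ s ∈ A - A, energy (Asub A s) B =
      ∑ t ∈ A - A, ((dXY A A t : ℝ) ^ 2) * (dXY B B t : ℝ) := by
    simp only [energy_Asub_eq]
    rw [Finset.sum_comm]
    refine Finset.sum_congr rfl fun t _ => ?_
    rw [← Finset.sum_mul]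
    congr 1
    rw [← Nat.cast_sum, key, sq]
    push_cast
    ring
  rw [h1]
  have hpq : Real.HolderConjugate ((3 : ℝ) / 2) 3 := Real.holderConjugate_iff.mpr ⟨by norm_num, by norm_num⟩
  have holder := Real.inner_le_Lp_mul_Lq (A - A)
    (fun t => ((dXY A A t : ℝ) ^ 2)) (fun t => (dXY B B t : ℝ)) hpq
  have e1 : ∑ t ∈ A - A, |(dXY A A t : ℝ) ^ 2| ^ ((3 : ℝ) / 2) = energy3 A := by
    refine Finset.sum_congr rfl fun t _ => ?_
    rw [abs_of_nonneg (by positivity), rpow_sq_three_halves (by positivity)]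
  have e2 : ∑ t ∈ A - A, |(dXY B B t : ℝ)| ^ (3 : ℝ) ≤ energy3 B := by
    have e2a : ∀ t, |(dXY B B t : ℝ)| ^ (3 : ℝ) = (dXY B B t : ℝ) ^ 3 := fun t => by
      rw [abs_of_nonneg (by positivity), show (3:ℝ) = ((3:ℕ):ℝ) by norm_num, Real.rpow_natCast]
    calc ∑ t ∈ A - A, |(dXY B B t : ℝ)| ^ (3 : ℝ)
        = ∑ t ∈ (A - A).filter (· ∈ B - B), (dXY B B t : ℝ) ^ 3 := by
          rw [Finset.sum_filter]
          refine Finset.sum_congr rfl fun t _ => ?_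
          rw [e2a]
          by_cases h : t ∈ B - B
          · simp [h]
          · simp [h, dXY_eq_zero h]
      _ ≤ ∑ t ∈ B - B, (dXY B B t : ℝ) ^ 3 := by
          apply Finset.sum_le_sum_of_subset_of_nonneg
          · intro t ht; exact (Finset.mem_filter.mp ht).2
          · intro t _ _; positivity
      _ = energy3 B := rfl
  have h13 : (1 : ℝ) / ((3 : ℝ) / 2) = (2 : ℝ) / 3 := by norm_num
  rw [h13, e1] at holder
  refine holder.trans ?_
  apply mul_le_mul_of_nonneg_left
  · apply Real.rpow_le_rpow (by positivity) e2 (by norm_num)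
  · apply Real.rpow_nonneg
    unfold energy3; positivity
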